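/- Let d > 0 and c ≥ 0. Define g(k) = c·k·(1 - e^{4kd}) and j(k) = e^{2kd} + e^{4kd} for k ≥ 0. Then the derivative of g/j satisfies (g/j)'(k) = -c·e^{-2kd}·(e^{2kd} - 1 + 2kd) < 0 for all k > 0 (when c > 0); in particular g/j is strictly decreasing on [0, ∞), (g/j)(0) = 0, and (g/j)(k) → -∞ as k → +∞ when c > 0. -/

import Mathlib

open Real Filter Set

lemma stmt3_feq (d c : ℝ) :
    (fun k : ℝ => c*k*(1 - Real.exp (4*k*d)) / (Real.exp (2*k*d) + Real.exp (4*k*d)))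
      = fun k : ℝ => c*k*(Real.exp (-2*k*d) - 1) := by
  funext k
  have h4 : Real.exp (4*k*d) = Real.exp (2*k*d) * Real.exp (2*k*d) := by
    rw [← Real.exp_add]; ring_nf
  have hneg : Real.exp (-2*k*d) = (Real.exp (2*k*d))⁻¹ := by
    rw [← Real.exp_neg]; ring_nf
  have hE : Real.exp (2*k*d) ≠ 0 := (Real.exp_pos _).ne'
  have hE1 : Real.exp (2*k*d) + Real.exp (4*k*d) ≠ 0 := by positivity
  rw [h4, hneg]
  rw [h4] at hE1
  field_simp
  ring

lemma stmt3_hd (d c : ℝ) (k : ℝ) :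
    HasDerivAt (fun k : ℝ => c*k*(Real.exp (-2*k*d) - 1))
      (c*(Real.exp (-2*k*d) - 1) + c*k*(Real.exp (-2*k*d)*(-2*d))) k := by
  have h1 : HasDerivAt (fun k : ℝ => -2*k*d) (-2*d) k := by
    simpa using ((hasDerivAt_id k).const_mul (-2:ℝ)).mul_const d
  have h2 := h1.exp
  have h3 : HasDerivAt (fun k : ℝ => c*k) c k := by
    simpa using (hasDerivAt_id k).const_mul c
  simpa [mul_assoc, Pi.mul_def] using h3.mul (h2.sub_const 1)

theorem stmt3 (d c : ℝ) (hd : 0 < d) (hc : 0 ≤ c) :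
    (∀ k : ℝ, 0 < k →
      deriv (fun k : ℝ =>
          c*k*(1 - Real.exp (4*k*d)) / (Real.exp (2*k*d) + Real.exp (4*k*d))) k
        = -c * Real.exp (-2*k*d) * (Real.exp (2*k*d) - 1 + 2*k*d)) ∧
    (0 < c → ∀ k : ℝ, 0 < k →
      deriv (fun k : ℝ =>
          c*k*(1 - Real.exp (4*k*d)) / (Real.exp (2*k*d) + Real.exp (4*k*d))) k < 0) ∧
    (0 < c → StrictAntiOn (fun k : ℝ =>
        c*k*(1 - Real.exp (4*k*d)) / (Real.exp (2*k*d) + Real.exp (4*k*d))) (Set.Ici 0)) ∧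
    c*(0:ℝ)*(1 - Real.exp (4*0*d)) / (Real.exp (2*0*d) + Real.exp (4*0*d)) = 0 ∧
    (0 < c → Filter.Tendsto (fun k : ℝ =>
        c*k*(1 - Real.exp (4*k*d)) / (Real.exp (2*k*d) + Real.exp (4*k*d)))
      Filter.atTop Filter.atBot) := by
  have hderiv : ∀ k : ℝ,
      deriv (fun k : ℝ =>
          c*k*(1 - Real.exp (4*k*d)) / (Real.exp (2*k*d) + Real.exp (4*k*d))) k
        = -c * Real.exp (-2*k*d) * (Real.exp (2*k*d) - 1 + 2*k*d) := by
    intro k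
    rw [stmt3_feq d c, (stmt3_hd d c k).deriv]
    have hneg : Real.exp (-2*k*d) = (Real.exp (2*k*d))⁻¹ := by
      rw [← Real.exp_neg]; ring_nf
    have hE : Real.exp (2*k*d) ≠ 0 := (Real.exp_pos _).ne'
    rw [hneg]
    field_simp
    ring
  have hderivneg : 0 < c → ∀ k : ℝ, 0 < k →
      deriv (fun k : ℝ =>
          c*k*(1 - Real.exp (4*k*d)) / (Real.exp (2*k*d) + Real.exp (4*k*d))) k < 0 := by
    intro hc' k hk
    rw [hderiv k]
    have h1 : 1 < Real.exp (2*k*d) := by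
      have h0 : (0:ℝ) < 2*k*d := by positivity
      simpa using Real.exp_lt_exp.mpr h0
    have h2 : 0 < Real.exp (2*k*d) - 1 + 2*k*d := by nlinarith
    have h3 : 0 < Real.exp (-2*k*d) := Real.exp_pos _
    nlinarith [mul_pos (mul_pos hc' h3) h2]
  refine ⟨fun k _ => hderiv k, hderivneg, ?_, by simp, ?_⟩
  · intro hc'
    apply strictAntiOn_of_deriv_neg (convex_Ici 0)
    · apply ContinuousOn.div
      · fun_prop
      · fun_prop
      · intro x _; positivity
    · intro k hk
      rw [interior_Ici] at hk
      exact hderivneg hc' k hk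
  · intro hc'
    rw [stmt3_feq d c]
    have h1 : Tendsto (fun k : ℝ => c*k) atTop atTop :=
      (tendsto_id.const_mul_atTop hc')
    have h2 : Tendsto (fun k : ℝ => Real.exp (-2*k*d) - 1) atTop (nhds (-1)) := by
      have : Tendsto (fun k : ℝ => -2*k*d) atTop atBot := by
        have : Tendsto (fun k : ℝ => (-2*d)*k) atTop atBot :=
          tendsto_id.const_mul_atTop_of_neg (by nlinarith) |>.mono_right le_rfl
        refine this.congr (fun k => by ring)
      have h3 : Tendsto (fun k : ℝ => Real.exp (-2*k*d)) atTop (nhds 0) :=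
        Real.tendsto_exp_atBot.comp this
      simpa using h3.sub_const 1
    exact h1.atTop_mul_neg (by norm_num) h2
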